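/- Let Δ_{5,2} ⊂ ℝ^5 be the hypersimplex with vertices Λ_{pq} = e_p + e_q, 1 ≤ p < q ≤ 5, and let {i,j} and {k,l} be disjoint two-element subsets of {1,…,5}. Let P_{ij} be the convex hull of {Λ_{ij}} ∪ {Λ_{im}, Λ_{jm} : m ∉ {i,j}}, let P_{kl} be defined analogously, and let K_{ij,kl} be the convex hull of the eight vertices {Λ_{pq} : {p,q} ∉ {{i,j},{k,l}}}. Then P_{ij} ∪ K_{ij,kl} ∪ P_{kl} = Δ_{5,2} and the relative interiors (within the affine hyperplane x_1+⋯+x_5 = 2) of P_{ij}, K_{ij,kl}, P_{kl} are pairwise disjoint; that is, the triple {P_{ij}, K_{ij,kl}, P_{kl}} is a polyhedral decomposition of Δ_{5,2}. -/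

import Mathlib

/-- The vertex `Λ_{pq} = e_p + e_q` of the hypersimplex `Δ_{5,2} ⊂ ℝ⁵`. -/
noncomputable def Lam (p q : Fin 5) : EuclideanSpace ℝ (Fin 5) :=
  EuclideanSpace.single p 1 + EuclideanSpace.single q 1

/-- The hypersimplex `Δ_{5,2}`: the convex hull of the ten points `Λ_{pq}`, `p ≠ q`. -/
noncomputable def hyperSimplex52 : Set (EuclideanSpace ℝ (Fin 5)) :=
  convexHull ℝ {x | ∃ p q : Fin 5, p ≠ q ∧ x = Lam p q}

/-- The seven-sided pyramid `P_{ij}` with apex `Λ_{ij}`: the convex hull of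
`{Λ_{ij}} ∪ {Λ_{im}, Λ_{jm} : m ∉ {i,j}}`. -/
noncomputable def pyramidP (i j : Fin 5) : Set (EuclideanSpace ℝ (Fin 5)) :=
  convexHull ℝ {x | x = Lam i j ∨ ∃ m, m ≠ i ∧ m ≠ j ∧ (x = Lam i m ∨ x = Lam j m)}

/-- The polytope `K_{ij,kl}` on the eight vertices `{Λ_{pq} : {p,q} ∉ {{i,j},{k,l}}}`. -/
noncomputable def polytopeK2 (i j k l : Fin 5) : Set (EuclideanSpace ℝ (Fin 5)) :=
  convexHull ℝ
    {x | ∃ p q : Fin 5, p ≠ q ∧ ({p, q} : Set (Fin 5)) ≠ ({i, j} : Set (Fin 5)) ∧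
      ({p, q} : Set (Fin 5)) ≠ ({k, l} : Set (Fin 5)) ∧ x = Lam p q}

lemma Lam_apply (p q c : Fin 5) :
    Lam p q c = (if c = p then (1:ℝ) else 0) + (if c = q then 1 else 0) := by
  simp [Lam, EuclideanSpace.single_apply, PiLp.add_apply]

lemma fin5_fifth : ∀ i j k l : Fin 5, i ≠ j → i ≠ k → i ≠ l → j ≠ k → j ≠ l → k ≠ l →
    ∃ m, m ≠ i ∧ m ≠ j ∧ m ≠ k ∧ m ≠ l := by decide

lemma fin5_cases : ∀ i j k l m : Fin 5, i ≠ j → i ≠ k → i ≠ l → i ≠ m → j ≠ k → j ≠ l →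
    j ≠ m → k ≠ l → k ≠ m → l ≠ m → ∀ c : Fin 5, c = i ∨ c = j ∨ c = k ∨ c = l ∨ c = m := by
  decide

lemma pair_ne_fst {p q a b : Fin 5} (h1 : a ≠ p) (h2 : a ≠ q) :
    ({p, q} : Set (Fin 5)) ≠ {a, b} := by
  intro h
  have : a ∈ ({p, q} : Set (Fin 5)) := by rw [h]; exact Set.mem_insert a {b}
  simp only [Set.mem_insert_iff, Set.mem_singleton_iff] at this
  tauto

lemma pair_ne_snd {p q a b : Fin 5} (h1 : b ≠ p) (h2 : b ≠ q) :
    ({p, q} : Set (Fin 5)) ≠ {a, b} := by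
  intro h
  have : b ∈ ({p, q} : Set (Fin 5)) := by rw [h]; simp
  simp only [Set.mem_insert_iff, Set.mem_singleton_iff] at this
  tauto

lemma Lam_pair_le {p q a b : Fin 5} (hpq : p ≠ q) (hab : a ≠ b)
    (hne : ({p, q} : Set (Fin 5)) ≠ {a, b}) : Lam p q a + Lam p q b ≤ 1 := by
  rcases eq_or_ne a p with h1 | h1 <;> rcases eq_or_ne a q with h2 | h2 <;>
    rcases eq_or_ne b p with h3 | h3 <;> rcases eq_or_ne b q with h4 | h4 <;>
    simp [Lam_apply, h1, h2, h3, h4, hpq, Ne.symm hpq] <;>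
    first
      | exact absurd (h1.symm.trans h2) hpq
      | exact absurd (h3.symm.trans h4) hpq
      | exact absurd (h1.trans h3.symm) hab
      | exact absurd (h2.trans h4.symm) hab
      | exact absurd (by rw [h1, h4]) hne
      | exact absurd (by rw [h2, h3, Set.pair_comm]) hne
      | norm_num

lemma sum_mem_hull {n : ℕ} {s : Set (EuclideanSpace ℝ (Fin 5))} {w : Fin n → ℝ}
    {z : Fin n → EuclideanSpace ℝ (Fin 5)} (hw : ∀ t, 0 ≤ w t) (h1 : ∑ t, w t = 1)
    (hz : ∀ t, z t ∈ s) : (∑ t, w t • z t) ∈ convexHull ℝ s := by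
  have := Finset.univ.centerMass_mem_convexHull (w := w) (z := z) (fun t _ => hw t)
    (by rw [h1]; norm_num) (fun t _ => hz t)
  rwa [Finset.centerMass_eq_of_sum_1 _ _ h1] at this

lemma mem7 {s : Set (EuclideanSpace ℝ (Fin 5))} {z0 z1 z2 z3 z4 z5 z6 : EuclideanSpace ℝ (Fin 5)}
    (h0 : z0 ∈ s) (h1 : z1 ∈ s) (h2 : z2 ∈ s) (h3 : z3 ∈ s) (h4 : z4 ∈ s) (h5 : z5 ∈ s)
    (h6 : z6 ∈ s) {w0 w1 w2 w3 w4 w5 w6 : ℝ} (n0 : 0 ≤ w0) (n1 : 0 ≤ w1) (n2 : 0 ≤ w2)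
    (n3 : 0 ≤ w3) (n4 : 0 ≤ w4) (n5 : 0 ≤ w5) (n6 : 0 ≤ w6)
    (hsum : w0 + w1 + w2 + w3 + w4 + w5 + w6 = 1) :
    w0 • z0 + w1 • z1 + w2 • z2 + w3 • z3 + w4 • z4 + w5 • z5 + w6 • z6 ∈ convexHull ℝ s := by
  have := sum_mem_hull (w := ![w0, w1, w2, w3, w4, w5, w6]) (z := ![z0, z1, z2, z3, z4, z5, z6])
    (fun t => by fin_cases t <;> assumption)
    (by simp [Fin.sum_univ_succ]; linarith)
    (fun t => by fin_cases t <;> assumption)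
  simpa [Fin.sum_univ_succ, ← add_assoc] using this

lemma mem8 {s : Set (EuclideanSpace ℝ (Fin 5))}
    {z0 z1 z2 z3 z4 z5 z6 z7 : EuclideanSpace ℝ (Fin 5)}
    (h0 : z0 ∈ s) (h1 : z1 ∈ s) (h2 : z2 ∈ s) (h3 : z3 ∈ s) (h4 : z4 ∈ s) (h5 : z5 ∈ s)
    (h6 : z6 ∈ s) (h7 : z7 ∈ s) {w0 w1 w2 w3 w4 w5 w6 w7 : ℝ} (n0 : 0 ≤ w0) (n1 : 0 ≤ w1)
    (n2 : 0 ≤ w2) (n3 : 0 ≤ w3) (n4 : 0 ≤ w4) (n5 : 0 ≤ w5) (n6 : 0 ≤ w6) (n7 : 0 ≤ w7)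
    (hsum : w0 + w1 + w2 + w3 + w4 + w5 + w6 + w7 = 1) :
    w0 • z0 + w1 • z1 + w2 • z2 + w3 • z3 + w4 • z4 + w5 • z5 + w6 • z6 + w7 • z7 ∈
      convexHull ℝ s := by
  have := sum_mem_hull (w := ![w0, w1, w2, w3, w4, w5, w6, w7])
    (z := ![z0, z1, z2, z3, z4, z5, z6, z7])
    (fun t => by fin_cases t <;> assumption)
    (by simp [Fin.sum_univ_succ]; linarith)
    (fun t => by fin_cases t <;> assumption)
  simpa [Fin.sum_univ_succ, ← add_assoc] using this

lemma hyper_sub : hyperSimplex52 ⊆ {x | (∑ c, x c) = 2 ∧ ∀ c, 0 ≤ x c ∧ x c ≤ 1} := by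
  apply convexHull_min
  · rintro x ⟨p, q, hpq, rfl⟩
    refine ⟨by norm_num [Lam_apply, Finset.sum_add_distrib], fun c => ⟨?_, ?_⟩⟩
    · rw [Lam_apply]; split_ifs <;> norm_num
    · rw [Lam_apply]; split_ifs with h1 h2 <;> norm_num
      exact hpq (by rw [← h1, ← h2])
  · intro x hx y hy a b ha hb hab
    refine ⟨?_, fun c => ⟨?_, ?_⟩⟩
    · simp only [PiLp.add_apply, PiLp.smul_apply, smul_eq_mul, Finset.sum_add_distrib,
        ← Finset.mul_sum, hx.1, hy.1]
      linarith
    · have := (hx.2 c).1; have := (hy.2 c).1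
      simp only [PiLp.add_apply, PiLp.smul_apply, smul_eq_mul]
      nlinarith
    · have := (hx.2 c).2; have := (hy.2 c).2
      simp only [PiLp.add_apply, PiLp.smul_apply, smul_eq_mul]
      nlinarith

lemma lt_of_mem_intrinsicInterior {E : Type*} [NormedAddCommGroup E] [NormedSpace ℝ E]
    {s : Set E} (f : E →L[ℝ] ℝ) {c : ℝ}
    (hs : ∀ y ∈ s, c ≤ f y) {y₀ : E} (hy₀ : y₀ ∈ s) (hy₀c : c < f y₀)
    {x : E} (hx : x ∈ intrinsicInterior ℝ s) : c < f x := by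
  obtain ⟨z, hz, hzx⟩ := mem_intrinsicInterior.1 hx
  have hxs : x ∈ s := intrinsicInterior_subset hx
  rcases lt_or_eq_of_le (hs x hxs) with h | h
  · exact h
  exfalso
  have hxa : x ∈ affineSpan ℝ s := subset_affineSpan ℝ s hxs
  have hya : y₀ ∈ affineSpan ℝ s := subset_affineSpan ℝ s hy₀
  have hmem : ∀ t : ℝ, t • (x - y₀) + y₀ ∈ affineSpan ℝ s := by
    intro t
    have := AffineSubspace.smul_vsub_vadd_mem (affineSpan ℝ s) t hxa hya hya
    simpa [vsub_eq_sub, vadd_eq_add] using this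
  set γ : ℝ → affineSpan ℝ s := fun t => ⟨t • (x - y₀) + y₀, hmem t⟩ with hγ
  have hcont : Continuous γ := by
    apply Continuous.subtype_mk
    continuity
  have hγ1 : γ 1 = z := by
    apply Subtype.ext
    simp [hγ, ← hzx]
  have hnhds : γ ⁻¹' interior ((↑) ⁻¹' s : Set (affineSpan ℝ s)) ∈ nhds (1 : ℝ) := by
    apply hcont.continuousAt.preimage_mem_nhds
    rw [hγ1]
    exact isOpen_interior.mem_nhds hz
  obtain ⟨ε, hε, hball⟩ := Metric.mem_nhds_iff.1 hnhds
  set t : ℝ := 1 + ε / 2 with ht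
  have htb : t ∈ Metric.ball (1:ℝ) ε := by
    simp [ht, Metric.mem_ball, abs_of_nonneg, hε.le]
    linarith
  have hts : γ t ∈ interior ((↑) ⁻¹' s : Set (affineSpan ℝ s)) := hball htb
  have htss' : γ t ∈ ((↑) ⁻¹' s : Set (affineSpan ℝ s)) := interior_subset hts
  have htss : (t • (x - y₀) + y₀) ∈ s := htss'
  have := hs _ htss
  have hft : f (t • (x - y₀) + y₀) = t * (f x - f y₀) + f y₀ := by
    simp [map_add, map_smul, map_sub, smul_eq_mul]
  rw [hft, ← h, ht] at this
  nlinarith [hε, hy₀c]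

lemma P_mem (i j k l m : Fin 5) (hij : i ≠ j) (hik : i ≠ k) (hil : i ≠ l) (him : i ≠ m)
    (hjk : j ≠ k) (hjl : j ≠ l) (hjm : j ≠ m) (hkl : k ≠ l) (hkm : k ≠ m) (hlm : l ≠ m)
    (hcases : ∀ c : Fin 5, c = i ∨ c = j ∨ c = k ∨ c = l ∨ c = m)
    (x : EuclideanSpace ℝ (Fin 5)) (hsum : x i + x j + x k + x l + x m = 2)
    (hb : ∀ c, 0 ≤ x c ∧ x c ≤ 1) (hf : 1 ≤ x i + x j) : x ∈ pyramidP i j := by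
  by_cases hS : x i + x j = 2
  · have hxi : x i = 1 := le_antisymm (hb i).2 (by linarith [(hb j).2])
    have hxj : x j = 1 := le_antisymm (hb j).2 (by linarith [(hb i).2])
    have hxk : x k = 0 := le_antisymm (by linarith [(hb l).1, (hb m).1]) (hb k).1
    have hxl : x l = 0 := le_antisymm (by linarith [(hb k).1, (hb m).1]) (hb l).1
    have hxm : x m = 0 := le_antisymm (by linarith [(hb k).1, (hb l).1]) (hb m).1
    apply subset_convexHull ℝ _
    left
    ext c
    rcases hcases c with rfl | rfl | rfl | rfl | rfl <;>
      simp_all [Lam_apply, Ne.symm hij, Ne.symm hik, Ne.symm hil, Ne.symm him, Ne.symm hjk,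
        Ne.symm hjl, Ne.symm hjm, Ne.symm hkl, Ne.symm hkm, Ne.symm hlm]
  · have hS0 : (2 : ℝ) - x i - x j ≠ 0 := by intro h; apply hS; linarith
    have hSpos : (0:ℝ) < 2 - x i - x j :=
      lt_of_le_of_ne (by linarith [(hb i).2, (hb j).2]) (Ne.symm hS0)
    have hvx : ∀ c : Fin 5, 0 ≤ 1 - x c := fun c => by linarith [(hb c).2]
    have key : x = (x i + x j - 1) • Lam i j +
        (x k * (1 - x j) / (2 - x i - x j)) • Lam i k +
        (x l * (1 - x j) / (2 - x i - x j)) • Lam i l +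
        (x m * (1 - x j) / (2 - x i - x j)) • Lam i m +
        (x k * (1 - x i) / (2 - x i - x j)) • Lam j k +
        (x l * (1 - x i) / (2 - x i - x j)) • Lam j l +
        (x m * (1 - x i) / (2 - x i - x j)) • Lam j m := by
      ext c
      simp only [PiLp.add_apply, PiLp.smul_apply, Lam_apply, smul_eq_mul]
      rcases hcases c with h | h | h | h | h
      · subst h
        simp only [if_pos rfl, ↓reduceIte, if_neg hij, if_neg hik, if_neg hil, if_neg him,
          add_zero, zero_add, mul_zero, mul_one]
        field_simp
        linear_combination (x j - 1) * hsum
      · subst h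
        simp only [if_pos rfl, ↓reduceIte, if_neg (Ne.symm hij), if_neg hjk, if_neg hjl, if_neg hjm,
          add_zero, zero_add, mul_zero, mul_one]
        field_simp
        linear_combination (x i - 1) * hsum
      · subst h
        simp only [if_pos rfl, ↓reduceIte, if_neg (Ne.symm hik), if_neg (Ne.symm hjk), if_neg hkl,
          if_neg hkm, add_zero, zero_add, mul_zero, mul_one]
        field_simp
        ring
      · subst h
        simp only [if_pos rfl, ↓reduceIte, if_neg (Ne.symm hil), if_neg (Ne.symm hjl),
          if_neg (Ne.symm hkl), if_neg hlm, add_zero, zero_add, mul_zero, mul_one]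
        field_simp
        ring
      · subst h
        simp only [if_pos rfl, ↓reduceIte, if_neg (Ne.symm him), if_neg (Ne.symm hjm),
          if_neg (Ne.symm hkm), if_neg (Ne.symm hlm), add_zero, zero_add, mul_zero, mul_one]
        field_simp
        ring
    rw [key]
    apply mem7 (s := {x | x = Lam i j ∨ ∃ m', m' ≠ i ∧ m' ≠ j ∧ (x = Lam i m' ∨ x = Lam j m')})
    · exact Or.inl rfl
    · exact Or.inr ⟨k, Ne.symm hik, Ne.symm hjk, Or.inl rfl⟩
    · exact Or.inr ⟨l, Ne.symm hil, Ne.symm hjl, Or.inl rfl⟩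
    · exact Or.inr ⟨m, Ne.symm him, Ne.symm hjm, Or.inl rfl⟩
    · exact Or.inr ⟨k, Ne.symm hik, Ne.symm hjk, Or.inr rfl⟩
    · exact Or.inr ⟨l, Ne.symm hil, Ne.symm hjl, Or.inr rfl⟩
    · exact Or.inr ⟨m, Ne.symm him, Ne.symm hjm, Or.inr rfl⟩
    · linarith
    · exact div_nonneg (mul_nonneg (hb k).1 (hvx j)) hSpos.le
    · exact div_nonneg (mul_nonneg (hb l).1 (hvx j)) hSpos.le
    · exact div_nonneg (mul_nonneg (hb m).1 (hvx j)) hSpos.le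
    · exact div_nonneg (mul_nonneg (hb k).1 (hvx i)) hSpos.le
    · exact div_nonneg (mul_nonneg (hb l).1 (hvx i)) hSpos.le
    · exact div_nonneg (mul_nonneg (hb m).1 (hvx i)) hSpos.le
    · field_simp
      linear_combination (2 - x i - x j) * hsum

lemma K_mem (i j k l m : Fin 5) (hij : i ≠ j) (hik : i ≠ k) (hil : i ≠ l) (him : i ≠ m)
    (hjk : j ≠ k) (hjl : j ≠ l) (hjm : j ≠ m) (hkl : k ≠ l) (hkm : k ≠ m) (hlm : l ≠ m)
    (hcases : ∀ c : Fin 5, c = i ∨ c = j ∨ c = k ∨ c = l ∨ c = m)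
    (x : EuclideanSpace ℝ (Fin 5)) (hsum : x i + x j + x k + x l + x m = 2)
    (hb : ∀ c, 0 ≤ x c ∧ x c ≤ 1) (hA0 : 0 < x i + x j) (hB0 : 0 < x k + x l)
    (hA1 : x i + x j ≤ 1) (hB1 : x k + x l ≤ 1) : x ∈ polytopeK2 i j k l := by
  have hA0' : x i + x j ≠ 0 := ne_of_gt hA0
  have hB0' : x k + x l ≠ 0 := ne_of_gt hB0
  have hT : 0 ≤ x i + x j + (x k + x l) - 1 := by linarith [(hb m).2]
  have hvx : ∀ c : Fin 5, 0 ≤ 1 - x c := fun c => by linarith [(hb c).2]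
  have key : x =
      ((x i + x j + (x k + x l) - 1) * (x i * x k) / ((x i + x j) * (x k + x l))) • Lam i k +
      ((x i + x j + (x k + x l) - 1) * (x i * x l) / ((x i + x j) * (x k + x l))) • Lam i l +
      ((x i + x j + (x k + x l) - 1) * (x j * x k) / ((x i + x j) * (x k + x l))) • Lam j k +
      ((x i + x j + (x k + x l) - 1) * (x j * x l) / ((x i + x j) * (x k + x l))) • Lam j l +
      (x i * (1 - (x k + x l)) / (x i + x j)) • Lam i m +
      (x j * (1 - (x k + x l)) / (x i + x j)) • Lam j m +
      (x k * (1 - (x i + x j)) / (x k + x l)) • Lam k m +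
      (x l * (1 - (x i + x j)) / (x k + x l)) • Lam l m := by
    ext c
    simp only [PiLp.add_apply, PiLp.smul_apply, Lam_apply, smul_eq_mul]
    rcases hcases c with h | h | h | h | h
    · subst h
      simp only [if_pos rfl, ↓reduceIte, if_neg hij, if_neg hik, if_neg hil, if_neg him,
        add_zero, zero_add, mul_zero, mul_one]
      field_simp
      ring
    · subst h
      simp only [if_pos rfl, ↓reduceIte, if_neg (Ne.symm hij), if_neg hjk, if_neg hjl, if_neg hjm,
        add_zero, zero_add, mul_zero, mul_one]
      field_simp
      ring
    · subst h
      simp only [if_pos rfl, ↓reduceIte, if_neg (Ne.symm hik), if_neg (Ne.symm hjk), if_neg hkl,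
        if_neg hkm, add_zero, zero_add, mul_zero, mul_one]
      field_simp
      ring
    · subst h
      simp only [if_pos rfl, ↓reduceIte, if_neg (Ne.symm hil), if_neg (Ne.symm hjl),
        if_neg (Ne.symm hkl), if_neg hlm, add_zero, zero_add, mul_zero, mul_one]
      field_simp
      ring
    · subst h
      simp only [if_pos rfl, ↓reduceIte, if_neg (Ne.symm him), if_neg (Ne.symm hjm),
        if_neg (Ne.symm hkm), if_neg (Ne.symm hlm), add_zero, zero_add, mul_zero, mul_one]
      rw [show x c = 2 - (x i + x j) - (x k + x l) by linarith]
      field_simp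
      ring
  rw [key]
  have hD : (0:ℝ) < (x i + x j) * (x k + x l) := mul_pos hA0 hB0
  apply mem8 (s := {x | ∃ p q : Fin 5, p ≠ q ∧ ({p, q} : Set (Fin 5)) ≠ ({i, j} : Set (Fin 5)) ∧
      ({p, q} : Set (Fin 5)) ≠ ({k, l} : Set (Fin 5)) ∧ x = Lam p q})
  · exact ⟨i, k, hik, pair_ne_snd (Ne.symm hij) hjk,
      pair_ne_snd (Ne.symm hil) (Ne.symm hkl), rfl⟩
  · exact ⟨i, l, hil, pair_ne_snd (Ne.symm hij) hjl,
      pair_ne_fst (Ne.symm hik) hkl, rfl⟩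
  · exact ⟨j, k, hjk, pair_ne_fst hij hik, pair_ne_snd (Ne.symm hjl) (Ne.symm hkl), rfl⟩
  · exact ⟨j, l, hjl, pair_ne_fst hij hil, pair_ne_fst (Ne.symm hjk) hkl, rfl⟩
  · exact ⟨i, m, him, pair_ne_snd (Ne.symm hij) hjm,
      pair_ne_fst (Ne.symm hik) hkm, rfl⟩
  · exact ⟨j, m, hjm, pair_ne_fst hij him, pair_ne_fst (Ne.symm hjk) hkm, rfl⟩
  · exact ⟨k, m, hkm, pair_ne_fst hik him, pair_ne_snd (Ne.symm hkl) hlm, rfl⟩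
  · exact ⟨l, m, hlm, pair_ne_fst hil him, pair_ne_fst hkl hkm, rfl⟩
  · exact div_nonneg (mul_nonneg hT (mul_nonneg (hb i).1 (hb k).1)) hD.le
  · exact div_nonneg (mul_nonneg hT (mul_nonneg (hb i).1 (hb l).1)) hD.le
  · exact div_nonneg (mul_nonneg hT (mul_nonneg (hb j).1 (hb k).1)) hD.le
  · exact div_nonneg (mul_nonneg hT (mul_nonneg (hb j).1 (hb l).1)) hD.le
  · exact div_nonneg (mul_nonneg (hb i).1 (by linarith)) hA0.le
  · exact div_nonneg (mul_nonneg (hb j).1 (by linarith)) hA0.le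
  · exact div_nonneg (mul_nonneg (hb k).1 (by linarith)) hB0.le
  · exact div_nonneg (mul_nonneg (hb l).1 (by linarith)) hB0.le
  · field_simp
    ring

lemma P_ge (i j : Fin 5) (hij : i ≠ j) : ∀ y ∈ pyramidP i j, 1 ≤ y i + y j := by
  have : pyramidP i j ⊆ {y : EuclideanSpace ℝ (Fin 5) | 1 ≤ y i + y j} := by
    apply convexHull_min
    · rintro y (rfl | ⟨m', h1, h2, rfl | rfl⟩)
      · simp [Lam_apply, hij, Ne.symm hij]
      · simp [Lam_apply, hij, Ne.symm hij, Ne.symm h1, Ne.symm h2]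
      · simp [Lam_apply, hij, Ne.symm hij, Ne.symm h1, Ne.symm h2]
    · exact convex_halfSpace_ge
        ⟨fun u v => by simp [PiLp.add_apply]; ring,
         fun c u => by simp [PiLp.smul_apply, smul_eq_mul]; ring⟩ 1
  exact fun y hy => this hy

lemma P_other_le (k l a b : Fin 5) (hkl : k ≠ l) (hak : a ≠ k) (hal : a ≠ l) (hbk : b ≠ k)
    (hbl : b ≠ l) (hab : a ≠ b) : ∀ y ∈ pyramidP k l, y a + y b ≤ 1 := by
  have : pyramidP k l ⊆ {y : EuclideanSpace ℝ (Fin 5) | y a + y b ≤ 1} := by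
    apply convexHull_min
    · rintro y (rfl | ⟨m', h1, h2, rfl | rfl⟩) <;>
        simp only [Set.mem_setOf_eq, Lam_apply, if_neg hak, if_neg hal, if_neg hbk,
          if_neg hbl, add_zero, zero_add] <;>
        (try split_ifs with u v) <;> norm_num <;> exact hab (u.trans v.symm)
    · exact convex_halfSpace_le
        ⟨fun u v => by simp [PiLp.add_apply]; ring,
         fun c u => by simp [PiLp.smul_apply, smul_eq_mul]; ring⟩ 1
  exact fun y hy => this hy

lemma K_le (i j k l a b : Fin 5) (hab : a ≠ b)
    (hsel : ∀ p q : Fin 5, ({p, q} : Set (Fin 5)) ≠ ({i, j} : Set (Fin 5)) →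
      ({p, q} : Set (Fin 5)) ≠ ({k, l} : Set (Fin 5)) → ({p, q} : Set (Fin 5)) ≠ {a, b}) :
    ∀ y ∈ polytopeK2 i j k l, y a + y b ≤ 1 := by
  have : polytopeK2 i j k l ⊆ {y : EuclideanSpace ℝ (Fin 5) | y a + y b ≤ 1} := by
    apply convexHull_min
    · rintro y ⟨p, q, hpq, h1, h2, rfl⟩
      exact Lam_pair_le hpq hab (hsel p q h1 h2)
    · exact convex_halfSpace_le
        ⟨fun u v => by simp [PiLp.add_apply]; ring,
         fun c u => by simp [PiLp.smul_apply, smul_eq_mul]; ring⟩ 1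
  exact fun y hy => this hy

lemma disjoint_of_sep {s t : Set (EuclideanSpace ℝ (Fin 5))}
    (f : EuclideanSpace ℝ (Fin 5) →L[ℝ] ℝ)
    (hs : ∀ y ∈ s, 1 ≤ f y) (ht : ∀ y ∈ t, f y ≤ 1)
    {ys yt : EuclideanSpace ℝ (Fin 5)} (hys : ys ∈ s) (hfs : 1 < f ys) (hyt : yt ∈ t)
    (hft : f yt < 1) :
    Disjoint (intrinsicInterior ℝ s) (intrinsicInterior ℝ t) := by
  rw [Set.disjoint_left]
  intro x hxs hxt
  have h1 : 1 < f x := lt_of_mem_intrinsicInterior f hs hys hfs hxs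
  have h2 : (-1 : ℝ) < (-f) x :=
    lt_of_mem_intrinsicInterior (-f) (fun y hy => by simpa using neg_le_neg (ht y hy)) hyt
      (by simpa using hft) hxt
  simp only [ContinuousLinearMap.neg_apply, neg_lt, lt_neg] at h2
  linarith

/-- For disjoint two-element subsets `{i,j}` and `{k,l}` of `{1,…,5}`,
the triple `{P_{ij}, K_{ij,kl}, P_{kl}}` is a polyhedral decomposition of `Δ_{5,2}`:
the union is `Δ_{5,2}` and the relative (intrinsic) interiors are pairwise disjoint. -/
theorem statement15 (i j k l : Fin 5) (hij : i ≠ j) (hkl : k ≠ l)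
    (hik : i ≠ k) (hil : i ≠ l) (hjk : j ≠ k) (hjl : j ≠ l) :
    pyramidP i j ∪ polytopeK2 i j k l ∪ pyramidP k l = hyperSimplex52 ∧
    Disjoint (intrinsicInterior ℝ (pyramidP i j)) (intrinsicInterior ℝ (polytopeK2 i j k l)) ∧
    Disjoint (intrinsicInterior ℝ (pyramidP i j)) (intrinsicInterior ℝ (pyramidP k l)) ∧
    Disjoint (intrinsicInterior ℝ (polytopeK2 i j k l)) (intrinsicInterior ℝ (pyramidP k l)) := by
  obtain ⟨m, hmi, hmj, hmk, hml⟩ := fin5_fifth i j k l hij hik hil hjk hjl hkl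
  have him := Ne.symm hmi
  have hjm := Ne.symm hmj
  have hkm := Ne.symm hmk
  have hlm := Ne.symm hml
  have hcases := fin5_cases i j k l m hij hik hil him hjk hjl hjm hkl hkm hlm
  refine ⟨?_, ?_, ?_, ?_⟩
  · apply Set.Subset.antisymm
    · refine Set.union_subset (Set.union_subset ?_ ?_) ?_
      · exact convexHull_mono (by
          rintro y (rfl | ⟨m', h1, h2, rfl | rfl⟩)
          exacts [⟨i, j, hij, rfl⟩, ⟨i, m', Ne.symm h1, rfl⟩, ⟨j, m', Ne.symm h2, rfl⟩])
      · exact convexHull_mono (by rintro y ⟨p, q, hpq, _, _, rfl⟩; exact ⟨p, q, hpq, rfl⟩)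
      · exact convexHull_mono (by
          rintro y (rfl | ⟨m', h1, h2, rfl | rfl⟩)
          exacts [⟨k, l, hkl, rfl⟩, ⟨k, m', Ne.symm h1, rfl⟩, ⟨l, m', Ne.symm h2, rfl⟩])
    · intro x hx
      obtain ⟨hs2, hb⟩ := hyper_sub hx
      have huniv : (Finset.univ : Finset (Fin 5)) = {i, j, k, l, m} :=
        (Finset.eq_univ_iff_forall.2
          (fun c => by rcases hcases c with rfl | rfl | rfl | rfl | rfl <;> simp)).symm
      have hsum5 : x i + x j + x k + x l + x m = 2 := by
        rw [← hs2, huniv, Finset.sum_insert (by simp [hij, hik, hil, him]),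
          Finset.sum_insert (by simp [hjk, hjl, hjm]), Finset.sum_insert (by simp [hkl, hkm]),
          Finset.sum_insert (by simp [hlm]), Finset.sum_singleton]
        ring
      by_cases h1 : 1 ≤ x i + x j
      · exact Set.mem_union_left _ (Set.mem_union_left _
          (P_mem i j k l m hij hik hil him hjk hjl hjm hkl hkm hlm hcases x hsum5 hb h1))
      by_cases h2 : 1 ≤ x k + x l
      · exact Set.mem_union_right _
          (P_mem k l i j m hkl (Ne.symm hik) (Ne.symm hjk) hkm (Ne.symm hil) (Ne.symm hjl) hlm
            hij him hjm
            (fun c => by rcases hcases c with rfl | rfl | rfl | rfl | rfl <;> tauto)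
            x (by linarith) hb h2)
      · push_neg at h1 h2
        exact Set.mem_union_left _ (Set.mem_union_right _
          (K_mem i j k l m hij hik hil him hjk hjl hjm hkl hkm hlm hcases x hsum5 hb
            (by linarith [(hb m).2]) (by linarith [(hb m).2]) h1.le h2.le))
  · -- P_ij vs K
    refine disjoint_of_sep (EuclideanSpace.proj i + EuclideanSpace.proj j)
      (ys := Lam i j) (yt := Lam k m)
      (fun y hy => by simpa using P_ge i j hij y hy)
      (fun y hy => by simpa using K_le i j k l i j hij (fun p q h1 _ => h1) y hy)
      (subset_convexHull ℝ _ (Or.inl rfl)) ?_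
      (subset_convexHull ℝ _ ⟨k, m, hkm, pair_ne_fst hik him, pair_ne_snd (Ne.symm hkl) hlm, rfl⟩)
      ?_
    · simp [Lam_apply, hij, Ne.symm hij]
    · simp [Lam_apply, hik, him, hjk, hjm]
  · -- P_ij vs P_kl
    refine disjoint_of_sep (EuclideanSpace.proj i + EuclideanSpace.proj j)
      (ys := Lam i j) (yt := Lam k l)
      (fun y hy => by simpa using P_ge i j hij y hy)
      (fun y hy => by simpa using P_other_le k l i j hkl hik hil hjk hjl hij y hy)
      (subset_convexHull ℝ _ (Or.inl rfl)) ?_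
      (subset_convexHull ℝ _ (Or.inl rfl)) ?_
    · simp [Lam_apply, hij, Ne.symm hij]
    · simp [Lam_apply, hik, hil, hjk, hjl]
  · -- K vs P_kl
    apply Disjoint.symm
    refine disjoint_of_sep (EuclideanSpace.proj k + EuclideanSpace.proj l)
      (ys := Lam k l) (yt := Lam i m)
      (fun y hy => by simpa using P_ge k l hkl y hy)
      (fun y hy => by simpa using K_le i j k l k l hkl (fun p q _ h2 => h2) y hy)
      (subset_convexHull ℝ _ (Or.inl rfl)) ?_
      (subset_convexHull ℝ _ ⟨i, m, him, pair_ne_snd (Ne.symm hij) hjm,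
        pair_ne_fst (Ne.symm hik) hkm, rfl⟩) ?_
    · simp [Lam_apply, hkl, Ne.symm hkl]
    · simp [Lam_apply, Ne.symm hik, Ne.symm hil, hkm, hlm]
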